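/- For every natural number k ≥ 3, h(k) + 2·h(k − 2) = 4·h(k − 1) (equivalently, h(k) = 4·h(k−1) − 2·h(k−2)). -/

import Mathlib

/-- `hcomp k` is the sum over all compositions `c` of `k` of `∏_{p ∈ c.blocks} (p + 1)`;
in particular `hcomp 0 = 1`. -/
def hcomp (k : ℕ) : ℕ := ∑ c : Composition k, (c.blocks.map (· + 1)).prod

/-- Prepend a first block of size `n+1-i` to a composition of `i`. -/
def consComp (n : ℕ) (x : Σ i : Fin (n+1), Composition i) : Composition (n+1) :=
  ⟨(n + 1 - x.1) :: x.2.blocks, by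
      rintro j hj
      rcases List.mem_cons.1 hj with h | h
      · subst h; have := x.1.isLt; omega
      · exact x.2.blocks_pos h, by
      simp only [List.sum_cons, x.2.blocks_sum]
      have := x.1.isLt; omega⟩

lemma consComp_bij (n : ℕ) : Function.Bijective (consComp n) := by
  constructor
  · rintro ⟨i, c⟩ ⟨i', c'⟩ h
    have hb := congrArg Composition.blocks h
    simp only [consComp, List.cons.injEq] at hb
    obtain ⟨h1, h2⟩ := hb
    have hii : i = i' := by
      have := i.isLt; have := i'.isLt
      exact Fin.ext (by omega)
    subst hii
    exact congrArg (Sigma.mk i) (Composition.ext h2)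
  · intro c
    have hne : c.blocks ≠ [] := by
      intro h
      have := c.blocks_sum
      rw [h] at this; simp at this
    obtain ⟨a, l, hbl⟩ := List.exists_cons_of_ne_nil hne
    have ha : 0 < a := c.blocks_pos (hbl ▸ (List.mem_cons_self : a ∈ a :: l))
    have hsum := c.blocks_sum
    rw [hbl, List.sum_cons] at hsum
    refine ⟨⟨⟨l.sum, by omega⟩,
      ⟨l, fun h => c.blocks_pos (hbl ▸ List.mem_cons_of_mem a h), rfl⟩⟩, ?_⟩
    apply Composition.ext
    simp only [consComp, hbl, List.cons.injEq]
    exact ⟨by omega, trivial⟩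

lemma hcomp_succ (n : ℕ) :
    hcomp (n + 1) = ∑ i ∈ Finset.range (n + 1), (n + 2 - i) * hcomp i := by
  have h1 : hcomp (n + 1)
      = ∑ x : Σ i : Fin (n+1), Composition i,
          (n + 2 - (x.1 : ℕ)) * (x.2.blocks.map (· + 1)).prod := by
    rw [hcomp]
    refine (Fintype.sum_bijective (consComp n) (consComp_bij n) _ _ ?_).symm
    rintro ⟨i, c⟩
    have := i.isLt
    simp only [consComp, List.map_cons, List.prod_cons]
    congr 1
    omega
  rw [h1]
  rw [← Finset.univ_sigma_univ, Finset.sum_sigma]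
  rw [← Fin.sum_univ_eq_sum_range]
  refine Finset.sum_congr rfl fun i _ => ?_
  rw [hcomp, Finset.mul_sum]

lemma hcomp_step (n : ℕ) (hn : 1 ≤ n) :
    hcomp (n + 1) = 3 * hcomp n + ∑ i ∈ Finset.range n, hcomp i := by
  obtain ⟨m, rfl⟩ : ∃ m, n = m + 1 := ⟨n - 1, by omega⟩
  rw [hcomp_succ, Finset.sum_range_succ]
  have h2 : hcomp (m + 1) = ∑ i ∈ Finset.range (m + 1), (m + 2 - i) * hcomp i :=
    hcomp_succ m
  have key : ∑ i ∈ Finset.range (m + 1), (m + 1 + 2 - i) * hcomp i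
      = ∑ i ∈ Finset.range (m + 1), ((m + 2 - i) * hcomp i + hcomp i) := by
    refine Finset.sum_congr rfl fun i hi => ?_
    rw [Finset.mem_range] at hi
    have : m + 1 + 2 - i = (m + 2 - i) + 1 := by omega
    rw [this]; ring
  rw [key, Finset.sum_add_distrib, ← h2]
  have : m + 1 + 2 - (m + 1) = 2 := by omega
  rw [this]
  omega

/-- Linear recurrence (OEIS A003480): for `k ≥ 3`,
`hcomp k + 2·hcomp (k−2) = 4·hcomp (k−1)`. -/
theorem stmt_14 (k : ℕ) (hk : 3 ≤ k) :
    hcomp k + 2 * hcomp (k - 2) = 4 * hcomp (k - 1) := by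
  obtain ⟨m, rfl⟩ : ∃ m, k = m + 3 := ⟨k - 3, by omega⟩
  have h1 := hcomp_step (m + 2) (by omega)
  have h2 := hcomp_step (m + 1) (by omega)
  rw [Finset.sum_range_succ] at h1
  simp only [show m + 3 - 2 = m + 1 from rfl, show m + 3 - 1 = m + 2 from rfl,
    show m + 2 + 1 = m + 3 from rfl, show m + 1 + 1 = m + 2 from rfl] at *
  omega
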